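/- Let Σ be a transitive, invertible, two-sided subshift of finite type and let A : Σ → GL(d,ℝ) be a β-Hölder cocycle, and let μ > 0 satisfy ‖A(ω)‖ ≤ e^{μ} for all ω ∈ Σ. Suppose γ ∈ (0,1) and ε₀ > 0 satisfy μγ − β(1−γ) < −ε₀. Then there exists D > 0 such that for every ω ∈ Σ, every n ∈ ℕ, and every p ∈ Σ with p_i = ω_i for all |i| ≤ n, one has ‖A^{⌊γn⌋+1}(ω) − A^{⌊γn⌋+1}(p)‖ ≤ D·e^{−ε₀·n}. -/

import Mathlib

open scoped Matrix.Norms.L2Operator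

/-- Admissibility of a bi-infinite sequence with respect to the 0-1 transition matrix `Q`. -/
def Adm {m : ℕ} (Q : Fin m → Fin m → Bool) (ω : ℤ → Fin m) : Prop :=
  ∀ i : ℤ, Q (ω i) (ω (i + 1)) = true

/-- Transitivity of `Q`: for every pair `(a, b)` there is an admissible path of some
length `ℓ ≥ 1` from `a` to `b` (i.e. `(Q^ℓ)_{ab} > 0`). -/
def QTransitive {m : ℕ} (Q : Fin m → Fin m → Bool) : Prop :=
  ∀ a b : Fin m, ∃ ℓ : ℕ, 1 ≤ ℓ ∧ ∃ w : ℕ → Fin m, w 0 = a ∧ w ℓ = b ∧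
    ∀ i : ℕ, i < ℓ → Q (w i) (w (i + 1)) = true

/-- The two-sided subshift of finite type determined by `Q`. -/
def SFT {m : ℕ} (Q : Fin m → Fin m → Bool) : Type := {ω : ℤ → Fin m // Adm Q ω}

/-- The left shift `(σω)_i = ω_{i+1}`. -/
def shift {m : ℕ} (Q : Fin m → Fin m → Bool) (ω : SFT Q) : SFT Q :=
  ⟨fun i => ω.1 (i + 1), fun i => ω.2 (i + 1)⟩

/-- `N(ω,η) = min {|n| : ω_n ≠ η_n}`. -/
noncomputable def sepIndex {m : ℕ} (ω η : ℤ → Fin m) : ℕ :=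
  sInf {n : ℕ | ω (n : ℤ) ≠ η (n : ℤ) ∨ ω (-(n : ℤ)) ≠ η (-(n : ℤ))}

/-- The metric `d(ω,η) = e^{-N(ω,η)}` for `ω ≠ η`, and `d(ω,ω) = 0`. -/
noncomputable def shiftDist {m : ℕ} {Q : Fin m → Fin m → Bool} (ω η : SFT Q) : ℝ :=
  haveI : Decidable (ω = η) := Classical.dec _
  if ω = η then 0 else Real.exp (-(sepIndex ω.1 η.1 : ℝ))

/-- Iterates `A^n(x) = A(f^{n-1}x) ⋯ A(fx) A(x)` of a matrix cocycle over a map `f`. -/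
def cocycle {X : Type*} {d : ℕ} (A : X → Matrix (Fin d) (Fin d) ℝ) (f : X → X) :
    ℕ → X → Matrix (Fin d) (Fin d) ℝ
  | 0, _ => 1
  | n + 1, x => cocycle A f n (f x) * A x

/-- `A` is a `β`-Hölder `GL(d,ℝ)`-valued cocycle: each `A ω` is invertible and
`‖A ω - A η‖ ≤ C₀ d(ω,η)^β` in the operator norm. -/
def IsHolderCocycle {m d : ℕ} {Q : Fin m → Fin m → Bool} (β : ℝ)
    (A : SFT Q → Matrix (Fin d) (Fin d) ℝ) : Prop :=
  (∀ ω, IsUnit (A ω)) ∧ ∃ C₀ : ℝ, 0 < C₀ ∧ ∀ ω η, ‖A ω - A η‖ ≤ C₀ * shiftDist ω η ^ β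

/-- The multiset of moduli of the complex eigenvalues of `B`, with algebraic multiplicity. -/
noncomputable def eigModuli {d : ℕ} (B : Matrix (Fin d) (Fin d) ℝ) : Multiset ℝ :=
  ((B.map (algebraMap ℝ ℂ)).charpoly.roots).map (fun z => ‖z‖)

/-- `A` has constant periodic data with exponents `lam 0 ≥ lam 1 ≥ ⋯`: for every periodic
point `p` of period `n`, the moduli of the eigenvalues of `A^n(p)`, with algebraic
multiplicity, are exactly `e^{n·lam 0}, …, e^{n·lam (d-1)}`. -/
def ConstPeriodicData {m d : ℕ} {Q : Fin m → Fin m → Bool}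
    (A : SFT Q → Matrix (Fin d) (Fin d) ℝ) (lam : Fin d → ℝ) : Prop :=
  ∀ p : SFT Q, ∀ n : ℕ, 0 < n → (shift Q)^[n] p = p →
    eigModuli (cocycle A (shift Q) n p) =
      Multiset.ofList (List.ofFn fun i => Real.exp (n * lam i))

/-- The action of a matrix on Euclidean space `ℝ^d`. -/
noncomputable def matVec {d : ℕ} (B : Matrix (Fin d) (Fin d) ℝ) :
    EuclideanSpace ℝ (Fin d) →ₗ[ℝ] EuclideanSpace ℝ (Fin d) :=
  Matrix.toEuclideanLin B

/-- A dominated splitting of index `k` for the cocycle `A` over the shift: an invariant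
continuous splitting `E ⊕ F = ℝ^d` with `dim E = k` such that
`‖A^n(ω)|_F‖ ≤ C τ^n m(A^n(ω)|_E)`. -/
def HasDominatedSplitting {m d : ℕ} (Q : Fin m → Fin m → Bool)
    (A : SFT Q → Matrix (Fin d) (Fin d) ℝ) (k : ℕ) : Prop :=
  ∃ E F : SFT Q → Submodule ℝ (EuclideanSpace ℝ (Fin d)),
    (∀ ω, E ω ⊓ F ω = ⊥) ∧ (∀ ω, E ω ⊔ F ω = ⊤) ∧
    (∀ ω, Module.finrank ℝ (E ω) = k) ∧
    (∀ ω, (E ω).map (matVec (A ω)) = E (shift Q ω)) ∧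
    (∀ ω, (F ω).map (matVec (A ω)) = F (shift Q ω)) ∧
    (∃ P : SFT Q → EuclideanSpace ℝ (Fin d) →L[ℝ] EuclideanSpace ℝ (Fin d),
      (∀ ω, ∀ v ∈ E ω, P ω v = v) ∧ (∀ ω, ∀ v ∈ F ω, P ω v = 0) ∧
      ∀ ε : ℝ, 0 < ε → ∃ δ : ℝ, 0 < δ ∧ ∀ ω η, shiftDist ω η < δ → ‖P ω - P η‖ ≤ ε) ∧
    ∃ C : ℝ, 0 < C ∧ ∃ τ : ℝ, τ ∈ Set.Ioo (0 : ℝ) 1 ∧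
      ∀ ω, ∀ n : ℕ, ∀ v ∈ F ω, ∀ u ∈ E ω,
        ‖matVec (cocycle A (shift Q) n ω) v‖ * ‖u‖ ≤
          C * τ ^ n * (‖v‖ * ‖matVec (cocycle A (shift Q) n ω) u‖)


section AuxLemmas

variable {X : Type*} {dd : ℕ}

lemma aux_norm_one {d : ℕ} : ‖(1 : Matrix (Fin d) (Fin d) ℝ)‖ ≤ 1 := by
  rw [Matrix.cstar_norm_def, map_one]
  exact ContinuousLinearMap.norm_id_le

lemma aux_cocycle_norm_le {d : ℕ} (A : X → Matrix (Fin d) (Fin d) ℝ) (f : X → X)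
    (μ : ℝ) (hμ : 0 ≤ μ) (hb : ∀ x, ‖A x‖ ≤ Real.exp μ) :
    ∀ (k : ℕ) (x : X), ‖cocycle A f k x‖ ≤ Real.exp (μ * k) := by
  intro k
  induction k with
  | zero => intro x; simpa [cocycle] using aux_norm_one
  | succ n ih =>
    intro x
    calc ‖cocycle A f (n + 1) x‖ = ‖cocycle A f n (f x) * A x‖ := rfl
      _ ≤ ‖cocycle A f n (f x)‖ * ‖A x‖ := norm_mul_le _ _
      _ ≤ Real.exp (μ * n) * Real.exp μ := by
          exact mul_le_mul (ih (f x)) (hb x) (norm_nonneg _) (Real.exp_nonneg _)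
      _ = Real.exp (μ * (n + 1)) := by rw [← Real.exp_add]; ring_nf
      _ = Real.exp (μ * ((n : ℕ) + 1 : ℕ)) := by push_cast; ring_nf

lemma aux_cocycle_diff_le {d : ℕ} (A : X → Matrix (Fin d) (Fin d) ℝ) (f : X → X)
    (μ : ℝ) (hμ : 0 ≤ μ) (hb : ∀ x, ‖A x‖ ≤ Real.exp μ) (ε : ℝ) (hε : 0 ≤ ε) :
    ∀ (k : ℕ) (x y : X), (∀ j, j < k → ‖A (f^[j] x) - A (f^[j] y)‖ ≤ ε) →
      ‖cocycle A f k x - cocycle A f k y‖ ≤ k * ε * Real.exp (μ * k) := by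
  intro k
  induction k with
  | zero => intro x y _; simp [cocycle]
  | succ n ih =>
    intro x y h
    have hsplit : cocycle A f (n + 1) x - cocycle A f (n + 1) y
        = cocycle A f n (f x) * (A x - A y)
          + (cocycle A f n (f x) - cocycle A f n (f y)) * A y := by
      show cocycle A f n (f x) * A x - cocycle A f n (f y) * A y = _
      rw [mul_sub, sub_mul]
      abel
    have h0 : ‖A x - A y‖ ≤ ε := by simpa using h 0 (Nat.succ_pos n)
    have hih : ‖cocycle A f n (f x) - cocycle A f n (f y)‖ ≤ n * ε * Real.exp (μ * n) := by
      apply ih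
      intro j hj
      have := h (j + 1) (by omega)
      simpa [Function.iterate_succ_apply] using this
    have hnorm1 : ‖cocycle A f n (f x)‖ ≤ Real.exp (μ * n) :=
      aux_cocycle_norm_le A f μ hμ hb n (f x)
    have hAy : ‖A y‖ ≤ Real.exp μ := hb y
    have key : ‖cocycle A f (n + 1) x - cocycle A f (n + 1) y‖
        ≤ Real.exp (μ * n) * ε + (n * ε * Real.exp (μ * n)) * Real.exp μ := by
      rw [hsplit]
      refine (norm_add_le _ _).trans (add_le_add ?_ ?_)
      · exact (norm_mul_le _ _).trans
          (mul_le_mul hnorm1 h0 (norm_nonneg _) (Real.exp_nonneg _))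
      · exact (norm_mul_le _ _).trans
          (mul_le_mul hih hAy (norm_nonneg _) (by positivity))
    refine key.trans ?_
    have e1 : Real.exp (μ * n) ≤ Real.exp (μ * (n + 1)) := by
      apply Real.exp_le_exp.mpr; nlinarith
    have e2 : Real.exp (μ * n) * Real.exp μ = Real.exp (μ * (n + 1)) := by
      rw [← Real.exp_add]; ring_nf
    have hc : ((n + 1 : ℕ) : ℝ) = (n : ℝ) + 1 := by push_cast; ring
    rw [hc]
    have hexp0 : (0:ℝ) ≤ Real.exp (μ * n) := Real.exp_nonneg _
    nlinarith [Real.exp_nonneg (μ * ((n:ℝ) + 1)), mul_nonneg (Nat.cast_nonneg (α := ℝ) n) hε]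

lemma aux_shift_iterate {m : ℕ} {Q : Fin m → Fin m → Bool} (ω : SFT Q) (j : ℕ) (i : ℤ) :
    ((shift Q)^[j] ω).1 i = ω.1 (i + j) := by
  induction j generalizing ω i with
  | zero => simp
  | succ n ihn =>
    rw [Function.iterate_succ_apply]
    rw [ihn (shift Q ω) i]
    show ω.1 (i + n + 1) = _
    congr 1
    push_cast
    ring

lemma aux_shiftDist_nonneg {m : ℕ} {Q : Fin m → Fin m → Bool} (ω η : SFT Q) :
    0 ≤ shiftDist ω η := by
  unfold shiftDist
  split_ifs with h
  · exact le_refl 0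
  · exact (Real.exp_pos _).le

lemma aux_shiftDist_le {m : ℕ} {Q : Fin m → Fin m → Bool} (ω η : SFT Q) (t : ℝ)
    (h : ∀ n' : ℕ, (ω.1 (n' : ℤ) ≠ η.1 (n' : ℤ) ∨ ω.1 (-(n' : ℤ)) ≠ η.1 (-(n' : ℤ))) →
      t ≤ (n' : ℝ)) :
    shiftDist ω η ≤ Real.exp (-t) := by
  unfold shiftDist
  split_ifs with hne
  · exact (Real.exp_pos _).le
  · apply Real.exp_le_exp.mpr
    have hex : ∃ i : ℤ, ω.1 i ≠ η.1 i := by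
      by_contra hc
      push_neg at hc
      exact hne (Subtype.ext (funext hc))
    obtain ⟨i, hi⟩ := hex
    have hSne : {n : ℕ | ω.1 (n : ℤ) ≠ η.1 (n : ℤ) ∨
        ω.1 (-(n : ℤ)) ≠ η.1 (-(n : ℤ))}.Nonempty := by
      rcases le_or_gt 0 i with h0 | h0
      · exact ⟨i.toNat, Or.inl (by rwa [Int.toNat_of_nonneg h0])⟩
      · refine ⟨(-i).toNat, Or.inr ?_⟩
        rw [Int.toNat_of_nonneg (by omega)]
        simpa using hi
    have hmem := Nat.sInf_mem hSne
    have ht := h _ hmem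
    have hsep : t ≤ (sepIndex ω.1 η.1 : ℝ) := ht
    linarith

end AuxLemmas

/-- **Lemma (comparison of a cocycle along shadowing orbits).**
If `‖A(ω)‖ ≤ e^μ` for all `ω`, and `γ ∈ (0,1)`, `ε₀ > 0` satisfy
`μγ - β(1-γ) < -ε₀`, then there is `D > 0` such that whenever `p` agrees with `ω` on all
coordinates `|i| ≤ n`, one has `‖A^{⌊γn⌋+1}(ω) - A^{⌊γn⌋+1}(p)‖ ≤ D e^{-ε₀ n}`. -/
theorem cocycle_comparison_along_shadowing
    {m d : ℕ} (hm : 1 ≤ m) (hd : 1 ≤ d)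
    (Q : Fin m → Fin m → Bool) (hQ : QTransitive Q)
    (β : ℝ) (hβ : β ∈ Set.Ioc (0 : ℝ) 1)
    (A : SFT Q → Matrix (Fin d) (Fin d) ℝ) (hA : IsHolderCocycle β A)
    (μ : ℝ) (hμ : 0 < μ) (hbound : ∀ ω, ‖A ω‖ ≤ Real.exp μ)
    (γ : ℝ) (hγ : γ ∈ Set.Ioo (0 : ℝ) 1)
    (ε₀ : ℝ) (hε₀ : 0 < ε₀)
    (hineq : μ * γ - β * (1 - γ) < -ε₀) :
    ∃ D : ℝ, 0 < D ∧ ∀ ω : SFT Q, ∀ n : ℕ, ∀ p : SFT Q,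
      (∀ i : ℤ, |i| ≤ (n : ℤ) → p.1 i = ω.1 i) →
        ‖cocycle A (shift Q) (⌊γ * n⌋₊ + 1) ω - cocycle A (shift Q) (⌊γ * n⌋₊ + 1) p‖ ≤
          D * Real.exp (-ε₀ * n) := by
  obtain ⟨hβ0, hβ1⟩ := hβ
  obtain ⟨hγ0, hγ1⟩ := hγ
  obtain ⟨-, C₀, hC₀, hHol⟩ := hA
  set δ : ℝ := -ε₀ - (μ * γ - β * (1 - γ)) with hδdef
  have hδ : 0 < δ := by rw [hδdef]; linarith
  refine ⟨C₀ * Real.exp μ * (Real.exp δ / δ), by positivity, ?_⟩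
  intro ω n p hagree
  set k : ℕ := ⌊γ * n⌋₊ + 1 with hk
  have hfloor : (⌊γ * n⌋₊ : ℝ) ≤ γ * n := Nat.floor_le (by positivity)
  have hkle : (k : ℝ) ≤ γ * n + 1 := by rw [hk]; push_cast; linarith
  have hkn : ∀ j : ℕ, j < k → (j : ℝ) ≤ γ * n := by
    intro j hj
    have hjf : j ≤ ⌊γ * n⌋₊ := by omega
    have : (j : ℝ) ≤ (⌊γ * n⌋₊ : ℝ) := by exact_mod_cast hjf
    linarith
  have hjn : ∀ j : ℕ, j < k → (j : ℤ) ≤ (n : ℤ) := by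
    intro j hj
    have h1 := hkn j hj
    have h2 : (j : ℝ) ≤ (n : ℝ) := by nlinarith [Nat.cast_nonneg (α := ℝ) n]
    exact_mod_cast h2
  set ε : ℝ := C₀ * Real.exp (-(β * ((1 - γ) * n))) with hε
  have hεnn : 0 ≤ ε := by rw [hε]; positivity
  have hstep : ∀ j : ℕ, j < k →
      ‖A ((shift Q)^[j] ω) - A ((shift Q)^[j] p)‖ ≤ ε := by
    intro j hj
    have hjZ : (j : ℤ) ≤ (n : ℤ) := hjn j hj
    have hd : shiftDist ((shift Q)^[j] ω) ((shift Q)^[j] p)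
        ≤ Real.exp (-((1 - γ) * n)) := by
      apply aux_shiftDist_le
      intro n' hn'
      have key : (n : ℤ) + 1 - j ≤ (n' : ℤ) := by
        rcases hn' with hcase | hcase
        · rw [aux_shift_iterate, aux_shift_iterate] at hcase
          by_contra hlt
          push_neg at hlt
          exact hcase (((hagree _ (by rw [abs_le]; omega))).symm)
        · rw [aux_shift_iterate, aux_shift_iterate] at hcase
          by_contra hlt
          push_neg at hlt
          exact hcase (((hagree _ (by rw [abs_le]; omega))).symm)
      have keyR : (n : ℝ) + 1 - j ≤ (n' : ℝ) := by exact_mod_cast key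
      have hjγ := hkn j hj
      nlinarith
    refine (hHol _ _).trans ?_
    rw [hε]
    apply mul_le_mul_of_nonneg_left ?_ hC₀.le
    calc shiftDist ((shift Q)^[j] ω) ((shift Q)^[j] p) ^ β
        ≤ Real.exp (-((1 - γ) * n)) ^ β :=
          Real.rpow_le_rpow (aux_shiftDist_nonneg _ _) hd hβ0.le
      _ = Real.exp (-(β * ((1 - γ) * n))) := by
          rw [← Real.exp_mul]; ring_nf
  have hmain := aux_cocycle_diff_le A (shift Q) μ hμ.le hbound ε hεnn k ω p hstep
  refine hmain.trans ?_
  have hkn1 : (k : ℝ) ≤ (n : ℝ) + 1 := by nlinarith [Nat.cast_nonneg (α := ℝ) n]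
  have hek : Real.exp (μ * k) ≤ Real.exp μ * Real.exp (μ * (γ * n)) := by
    rw [← Real.exp_add]
    apply Real.exp_le_exp.mpr
    nlinarith
  have step1 : (k : ℝ) * ε * Real.exp (μ * k)
      ≤ ((n : ℝ) + 1) * ε * (Real.exp μ * Real.exp (μ * (γ * n))) := by
    apply mul_le_mul (mul_le_mul_of_nonneg_right hkn1 hεnn) hek (Real.exp_nonneg _)
    positivity
  refine step1.trans ?_
  have e : Real.exp (-(β * ((1 - γ) * (n : ℝ)))) * Real.exp (μ * (γ * n))
      = Real.exp (-(δ * n)) * Real.exp (-ε₀ * n) := by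
    rw [← Real.exp_add, ← Real.exp_add]
    congr 1
    rw [hδdef]
    ring
  have hexpand : ((n : ℝ) + 1) * ε * (Real.exp μ * Real.exp (μ * (γ * n)))
      = C₀ * Real.exp μ * (((n : ℝ) + 1) * Real.exp (-(δ * n))) * Real.exp (-ε₀ * n) := by
    rw [hε]
    linear_combination (((n : ℝ) + 1) * C₀ * Real.exp μ) * e
  rw [hexpand]
  apply mul_le_mul_of_nonneg_right ?_ (Real.exp_nonneg _)
  apply mul_le_mul_of_nonneg_left ?_ (by positivity : (0:ℝ) ≤ C₀ * Real.exp μ)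
  -- (n+1) * exp(-(δ n)) ≤ exp δ / δ
  have h2 : δ * ((n : ℝ) + 1) ≤ Real.exp (δ * ((n : ℝ) + 1)) := by
    linarith [Real.add_one_le_exp (δ * ((n : ℝ) + 1))]
  have h3 : Real.exp (δ * ((n : ℝ) + 1)) = Real.exp δ * Real.exp (δ * n) := by
    rw [← Real.exp_add]; ring_nf
  have hp : (0:ℝ) < Real.exp (δ * n) := Real.exp_pos _
  have h4 : ((n : ℝ) + 1) ≤ Real.exp δ * Real.exp (δ * n) / δ := by
    rw [le_div_iff₀ hδ]
    nlinarith
  calc ((n : ℝ) + 1) * Real.exp (-(δ * n))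
      ≤ (Real.exp δ * Real.exp (δ * n) / δ) * Real.exp (-(δ * n)) :=
        mul_le_mul_of_nonneg_right h4 (Real.exp_nonneg _)
    _ = Real.exp δ / δ := by
        rw [Real.exp_neg]
        field_simp
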